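/- Let M ≥ 2, d ≥ 2 and let A = (A_1,…,A_M) be an irreducible tuple of d×d real matrices. Then for every s > 0 the pressure P(A,s) is finite, i.e. P(A,s) > −∞. -/

import Mathlib

open MeasureTheory Filter Topology

/-- The operator norm on square real matrices induced by the Euclidean norm. -/
noncomputable def opNorm {n : Type*} [Fintype n] [DecidableEq n]
    (X : Matrix n n ℝ) : ℝ :=
  ‖Matrix.toEuclideanCLM (𝕜 := ℝ) X‖

/-- The spectral radius `ρ(X) = inf_{k ≥ 1} ‖X^k‖^(1/k)` (Gelfand). -/
noncomputable def specRad {n : Type*} [Fintype n] [DecidableEq n]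
    (X : Matrix n n ℝ) : ℝ :=
  ⨅ k : ℕ, opNorm (X ^ (k + 1)) ^ ((1 : ℝ) / (k + 1))

/-- The product `A_{x_n} ⋯ A_{x_1}` associated to the word `x = (x_1, …, x_n)`. -/
noncomputable def wordProd {M d n : ℕ} (A : Fin M → Matrix (Fin d) (Fin d) ℝ)
    (x : Fin n → Fin M) : Matrix (Fin d) (Fin d) ℝ :=
  (List.ofFn (fun i => A (x i))).reverse.prod

/-- The product `A_{x_n} ⋯ A_{x_1}` associated to the word `w = [x_1, …, x_n]`. -/
noncomputable def listProd {M d : ℕ} (A : Fin M → Matrix (Fin d) (Fin d) ℝ)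
    (w : List (Fin M)) : Matrix (Fin d) (Fin d) ℝ :=
  ((w.map A).reverse).prod

/-- Irreducibility: no invariant subspace `U` with `0 < dim U < d`. -/
def IsIrredTuple {M d : ℕ} (A : Fin M → Matrix (Fin d) (Fin d) ℝ) : Prop :=
  ¬ ∃ U : Submodule ℝ (Fin d → ℝ),
      (∀ i, U.map (A i).mulVecLin ≤ U) ∧ U ≠ ⊥ ∧ U ≠ ⊤

/-- The shift map on `Σ_M = {1,…,M}^ℕ`. -/
def shift {M : ℕ} : (ℕ → Fin M) → (ℕ → Fin M) := fun x n => x (n + 1)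

/-- The cylinder set `[x_1 ⋯ x_n]` determined by the word `w = [x_1, …, x_n]`. -/
def cyl {M : ℕ} (w : List (Fin M)) : Set (ℕ → Fin M) :=
  {y | ∀ i : Fin w.length, y (i : ℕ) = w.get i}

/-- The Gibbs inequality for `(A, s)` with constants `C > 0`, `P ∈ ℝ`. -/
def IsGibbs {M d : ℕ} (A : Fin M → Matrix (Fin d) (Fin d) ℝ) (s C P : ℝ)
    (μ : Measure (ℕ → Fin M)) : Prop :=
  ∀ w : List (Fin M), w ≠ [] →
    C⁻¹ * (μ (cyl w)).toReal ≤ Real.exp (-(w.length : ℝ) * P) * opNorm (listProd A w) ^ s ∧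
    Real.exp (-(w.length : ℝ) * P) * opNorm (listProd A w) ^ s ≤ C * (μ (cyl w)).toReal

/-- The pressure `P(A,s) = inf_{n ≥ 1} (1/n) log Σ_{|x| = n} ‖A_{x_n} ⋯ A_{x_1}‖^s ∈ [-∞, ∞)`,
with the convention that a term is `-∞` when the corresponding sum vanishes. -/
noncomputable def pressure {M d : ℕ} (A : Fin M → Matrix (Fin d) (Fin d) ℝ) (s : ℝ) : EReal :=
  ⨅ n : ℕ,
    if (∑ x : Fin (n + 1) → Fin M, opNorm (wordProd A x) ^ s) = 0 then (⊥ : EReal)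
    else ((Real.log (∑ x : Fin (n + 1) → Fin M, opNorm (wordProd A x) ^ s) / (n + 1) : ℝ) : EReal)

namespace Stmt1Aux
open Matrix

variable {M d : ℕ} (A : Fin M → Matrix (Fin d) (Fin d) ℝ)

lemma wordProd_zero (x : Fin 0 → Fin M) : wordProd A x = 1 := by
  simp [wordProd]

lemma wordProd_one (x : Fin 1 → Fin M) : wordProd A x = A (x 0) := by
  simp [wordProd]

lemma wordProd_cons {n : ℕ} (i : Fin M) (x : Fin n → Fin M) :
    wordProd A (Fin.cons i x) = wordProd A x * A i := by
  unfold wordProd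
  rw [List.ofFn_succ]
  simp

lemma wordProd_snoc {n : ℕ} (x : Fin n → Fin M) (i : Fin M) :
    wordProd A (Fin.snoc x i) = A i * wordProd A x := by
  unfold wordProd
  rw [List.ofFn_succ']
  simp

/-- Irreducibility gives a nonzero word product of every length. -/
lemma exists_word_ne_zero (hd : 2 ≤ d) (hA : IsIrredTuple A) (n : ℕ) :
    ∃ x : Fin n → Fin M, wordProd A x ≠ 0 := by
  classical
  by_contra hcon
  push_neg at hcon
  set p : ℕ → Prop := fun k => ∀ x : Fin k → Fin M, wordProd A x = 0 with hp_def
  have hone : (1 : Matrix (Fin d) (Fin d) ℝ) ≠ 0 := by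
    intro h
    have := congrFun (congrFun h ⟨0, by omega⟩) ⟨0, by omega⟩
    simp [Matrix.one_apply] at this
  have hp0 : ¬ p 0 := fun h => hone (by rw [← wordProd_zero A Fin.elim0]; exact h _)
  have hex : ∃ k, p k := ⟨n, hcon⟩
  have hk : p (Nat.find hex) := Nat.find_spec hex
  have hkne : Nat.find hex ≠ 0 := fun h => hp0 (h ▸ hk)
  obtain ⟨k', heq⟩ : ∃ k', Nat.find hex = k' + 1 := ⟨Nat.find hex - 1, by omega⟩
  rw [heq] at hk
  have hmin : ¬ p k' := Nat.find_min hex (by omega)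
  by_cases hz : ∀ i, A i = 0
  · -- all matrices are zero : span of a single basis vector is invariant
    refine hA ⟨Submodule.span ℝ {Pi.single (⟨0, by omega⟩ : Fin d) (1 : ℝ)}, ?_, ?_, ?_⟩
    · intro i
      rw [hz i]
      simp
    · rw [Ne, Submodule.span_singleton_eq_bot]
      intro h
      have := congrFun h ⟨0, by omega⟩
      simp at this
    · intro h
      have hmem : (Pi.single (⟨1, by omega⟩ : Fin d) (1 : ℝ) : Fin d → ℝ) ∈
          Submodule.span ℝ {Pi.single (⟨0, by omega⟩ : Fin d) (1 : ℝ)} := by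
        rw [h]; exact Submodule.mem_top
      rw [Submodule.mem_span_singleton] at hmem
      obtain ⟨c, hc⟩ := hmem
      have := congrFun hc ⟨1, by omega⟩
      simp [Pi.single_apply, Fin.ext_iff] at this
  · push_neg at hz
    obtain ⟨i₀, hi₀⟩ := hz
    -- the common kernel of all products of length k' is invariant
    set U : Submodule ℝ (Fin d → ℝ) :=
      ⨅ x : Fin k' → Fin M, LinearMap.ker (wordProd A x).mulVecLin with hU_def
    have hmemU : ∀ v, v ∈ U ↔ ∀ x : Fin k' → Fin M, (wordProd A x) *ᵥ v = 0 := by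
      intro v
      simp [hU_def, Submodule.mem_iInf, LinearMap.mem_ker, Matrix.mulVecLin_apply]
    have hconsz : ∀ (x : Fin k' → Fin M) (i : Fin M), wordProd A x * A i = 0 := by
      intro x i
      rw [← wordProd_cons]
      exact hk _
    refine hA ⟨U, ?_, ?_, ?_⟩
    · intro i u' hu'
      obtain ⟨u, hu, rfl⟩ := Submodule.mem_map.mp hu'
      rw [hmemU]
      intro x
      rw [Matrix.mulVecLin_apply, Matrix.mulVec_mulVec, hconsz, Matrix.zero_mulVec]
    · -- a nonzero column of A i₀ lies in U
      obtain ⟨a, b, hab⟩ : ∃ a b, A i₀ a b ≠ 0 := by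
        by_contra h
        push_neg at h
        exact hi₀ (by ext a b; exact h a b)
      intro hUbot
      have hwmem : (A i₀) *ᵥ Pi.single b 1 ∈ U := by
        rw [hmemU]
        intro x
        rw [Matrix.mulVec_mulVec, hconsz, Matrix.zero_mulVec]
      rw [hUbot, Submodule.mem_bot] at hwmem
      have := congrFun hwmem a
      rw [Matrix.mulVec_single] at this
      simp at this
      exact hab this
    · -- a vector not killed by some product of length k'
      obtain ⟨x₀, hx₀⟩ : ∃ x₀ : Fin k' → Fin M, wordProd A x₀ ≠ 0 := by
        by_contra h
        push_neg at h
        exact hmin h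
      obtain ⟨a, b, hab⟩ : ∃ a b, wordProd A x₀ a b ≠ 0 := by
        by_contra h
        push_neg at h
        exact hx₀ (by ext a b; exact h a b)
      intro hUtop
      have hmem : Pi.single b (1 : ℝ) ∈ U := by
        rw [hUtop]; exact Submodule.mem_top
      rw [hmemU] at hmem
      have := congrFun (hmem x₀) a
      rw [Matrix.mulVec_single] at this
      simp at this
      exact hab this

/-- `Sn A n = ∑_{|x| = n} P_x P_xᵀ`. -/
noncomputable def Sn (n : ℕ) : Matrix (Fin d) (Fin d) ℝ :=
  ∑ x : Fin n → Fin M, wordProd A x * (wordProd A x)ᵀ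

lemma Sn_zero : Sn A 0 = 1 := by
  simp [Sn, wordProd_zero]

lemma Sn_succ (n : ℕ) : Sn A (n + 1) = ∑ i : Fin M, A i * Sn A n * (A i)ᵀ := by
  rw [Sn, ← Equiv.sum_comp (Fin.snocEquiv (fun _ => Fin M)), Fintype.sum_prod_type]
  refine Finset.sum_congr rfl fun i _ => ?_
  rw [Sn, Finset.mul_sum, Finset.sum_mul]
  refine Finset.sum_congr rfl fun x _ => ?_
  have : (Fin.snocEquiv (fun _ => Fin M)) (i, x) = Fin.snoc x i := by
    funext j
    simp [Fin.snocEquiv]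
  rw [this, wordProd_snoc, Matrix.transpose_mul]
  noncomm_ring

/-- The completely positive map `X ↦ ∑ i, A i * X * (A i)ᵀ`, as a linear endomorphism of
entry functions `Fin d × Fin d → ℝ`. -/
noncomputable def Qp : (Fin d × Fin d → ℝ) →ₗ[ℝ] (Fin d × Fin d → ℝ) where
  toFun f p := ∑ i : Fin M, ∑ k : Fin d, ∑ l : Fin d, A i p.1 k * f (k, l) * A i p.2 l
  map_add' f g := by
    funext p
    simp [Pi.add_apply, mul_add, add_mul, Finset.sum_add_distrib]
  map_smul' c f := by
    funext p
    simp only [Pi.smul_apply, smul_eq_mul, RingHom.id_apply, Pi.mul_apply, Finset.mul_sum]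
    refine Finset.sum_congr rfl fun i _ => Finset.sum_congr rfl fun k _ =>
      Finset.sum_congr rfl fun l _ => by ring

lemma Qp_entries (X : Matrix (Fin d) (Fin d) ℝ) :
    Qp A (fun p => X p.1 p.2) = fun p => (∑ i : Fin M, A i * X * (A i)ᵀ) p.1 p.2 := by
  funext p
  simp only [Qp, LinearMap.coe_mk, AddHom.coe_mk, Matrix.sum_apply, Matrix.mul_apply,
    Matrix.transpose_apply, Finset.sum_mul]
  exact Finset.sum_congr rfl fun i _ => Finset.sum_comm

lemma pow_Qp_one (n : ℕ) :
    (Qp A ^ n) (fun p => (1 : Matrix (Fin d) (Fin d) ℝ) p.1 p.2)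
      = fun p => Sn A n p.1 p.2 := by
  induction n with
  | zero => rw [pow_zero, Module.End.one_apply, Sn_zero]
  | succ n ih =>
    rw [pow_succ', Module.End.mul_apply, ih, Qp_entries, ← Sn_succ]

/-- Fitting-style lower bound: if no iterate kills `v`, then `‖T^n v‖` decays at most
exponentially. -/
lemma fitting_bound {F : Type*} [NormedAddCommGroup F] [NormedSpace ℝ F]
    [FiniteDimensional ℝ F] (T : F →ₗ[ℝ] F) (v : F) (hv : ∀ n, (T ^ n) v ≠ 0) :
    ∃ c γ : ℝ, 0 < c ∧ 0 < γ ∧ ∀ n, c * γ ^ n ≤ ‖(T ^ n) v‖ := by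
  classical
  have hle : ∀ n, LinearMap.range (T ^ (n + 1)) ≤ LinearMap.range (T ^ n) := by
    intro n
    rw [pow_succ]
    exact LinearMap.range_comp_le_range T (T ^ n)
  obtain ⟨N, hN⟩ : ∃ N, Module.finrank ℝ (LinearMap.range (T ^ (N + 1)))
      = Module.finrank ℝ (LinearMap.range (T ^ N)) := by
    by_contra hcon
    push_neg at hcon
    have hdec : ∀ n, Module.finrank ℝ (LinearMap.range (T ^ (n + 1)))
        < Module.finrank ℝ (LinearMap.range (T ^ n)) := fun n =>
      lt_of_le_of_ne (Submodule.finrank_mono (hle n)) (hcon n)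
    have hbd : ∀ n, Module.finrank ℝ (LinearMap.range (T ^ n)) + n
        ≤ Module.finrank ℝ (LinearMap.range (T ^ 0)) := by
      intro n
      induction n with
      | zero => simp
      | succ n ih => have := hdec n; omega
    have := hbd (Module.finrank ℝ (LinearMap.range (T ^ 0)) + 1)
    omega
  have hrange : LinearMap.range (T ^ (N + 1)) = LinearMap.range (T ^ N) :=
    Submodule.eq_of_le_of_finrank_le (hle N) (le_of_eq hN.symm)
  set W := LinearMap.range (T ^ N) with hW
  have hmem : ∀ x ∈ W, T x ∈ W := by
    intro x hx
    obtain ⟨y, rfl⟩ := hx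
    rw [← hrange]
    exact ⟨y, by rw [pow_succ', Module.End.mul_apply]⟩
  set T' := T.restrict hmem with hT'
  have hsurj : Function.Surjective T' := by
    rintro ⟨w, hw⟩
    rw [← hrange] at hw
    obtain ⟨y, hy⟩ := hw
    refine ⟨⟨(T ^ N) y, LinearMap.mem_range_self _ y⟩, ?_⟩
    apply Subtype.ext
    show T ((T ^ N) y) = w
    rw [← Module.End.mul_apply, ← pow_succ', hy]
  have hinj : Function.Injective T' := LinearMap.injective_iff_surjective.mpr hsurj
  set e : W ≃ₗ[ℝ] W := LinearEquiv.ofBijective T' ⟨hinj, hsurj⟩ with he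
  set S : W →L[ℝ] W := LinearMap.toContinuousLinearMap (e.symm : W →ₗ[ℝ] W) with hS
  set C := max ‖S‖ 1 with hC
  have hC1 : 1 ≤ C := le_max_right _ _
  have hC0 : (0 : ℝ) < C := lt_of_lt_of_le one_pos hC1
  have key : ∀ (k : ℕ) (w : W), ‖w‖ ≤ C ^ k * ‖(T' ^ k) w‖ := by
    intro k
    induction k with
    | zero => intro w; simp
    | succ k ih =>
      intro w
      have h1 : ‖w‖ ≤ C * ‖T' w‖ := by
        have hw : S (T' w) = w := by
          show e.symm (T' w) = w
          have : T' w = e w := rfl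
          rw [this, LinearEquiv.symm_apply_apply]
        calc ‖w‖ = ‖S (T' w)‖ := by rw [hw]
          _ ≤ ‖S‖ * ‖T' w‖ := S.le_opNorm _
          _ ≤ C * ‖T' w‖ := by
              apply mul_le_mul_of_nonneg_right (le_max_left _ _) (norm_nonneg _)
      calc ‖w‖ ≤ C * ‖T' w‖ := h1
        _ ≤ C * (C ^ k * ‖(T' ^ k) (T' w)‖) := by
            exact mul_le_mul_of_nonneg_left (ih (T' w)) hC0.le
        _ = C ^ (k + 1) * ‖(T' ^ (k + 1)) w‖ := by
            rw [show (T' ^ (k + 1)) w = (T' ^ k) (T' w) by rw [pow_succ, Module.End.mul_apply]]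
            ring
  have hpowrel : ∀ (k : ℕ) (w : W), (((T' ^ k) w : W) : F) = (T ^ k) (w : F) := by
    intro k w
    rw [hT', Module.End.pow_restrict]
    exact LinearMap.restrict_coe_apply _ _ _
  have hposall : ∀ n, (0 : ℝ) < ‖(T ^ n) v‖ := fun n => norm_pos_iff.mpr (hv n)
  set w₀ : W := ⟨(T ^ N) v, LinearMap.mem_range_self _ v⟩ with hw₀
  set c := (Finset.range (N + 1)).inf' ⟨N, Finset.self_mem_range_succ N⟩
    (fun j => ‖(T ^ j) v‖) with hc
  have hcpos : 0 < c := by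
    rw [hc]
    exact (Finset.lt_inf'_iff _).2 fun j _ => hposall j
  have hcle : ∀ j, j ≤ N → c ≤ ‖(T ^ j) v‖ := fun j hj =>
    Finset.inf'_le _ (Finset.mem_range.mpr (by omega))
  have hCi0 : (0 : ℝ) < C⁻¹ := inv_pos.mpr hC0
  have hCi1 : C⁻¹ ≤ 1 := inv_le_one_of_one_le₀ hC1
  refine ⟨c, C⁻¹, hcpos, hCi0, fun n => ?_⟩
  by_cases hn : n ≤ N
  · have hp1 : C⁻¹ ^ n ≤ 1 := pow_le_one₀ hCi0.le hCi1
    have hcn := hcle n hn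
    nlinarith
  · push_neg at hn
    have hkey := key (n - N) w₀
    have hco : (((T' ^ (n - N)) w₀ : W) : F) = (T ^ n) v := by
      rw [hpowrel]
      show (T ^ (n - N)) ((T ^ N) v) = (T ^ n) v
      rw [← Module.End.mul_apply, ← pow_add, Nat.sub_add_cancel (le_of_lt hn)]
    have hnorm : ‖(T' ^ (n - N)) w₀‖ = ‖(T ^ n) v‖ := by
      rw [← Submodule.norm_coe, hco]
    have hw0n : ‖w₀‖ = ‖(T ^ N) v‖ := rfl
    rw [hnorm, hw0n] at hkey
    have h1 : c * C⁻¹ ^ n ≤ ‖(T ^ N) v‖ * C⁻¹ ^ (n - N) := by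
      have h2 : c ≤ ‖(T ^ N) v‖ := hcle N le_rfl
      have h3 : C⁻¹ ^ n ≤ C⁻¹ ^ (n - N) :=
        pow_le_pow_of_le_one hCi0.le hCi1 (by omega)
      exact mul_le_mul h2 h3 (pow_nonneg hCi0.le n) (norm_nonneg _)
    refine le_trans h1 ?_
    rw [inv_pow, ← div_eq_mul_inv, div_le_iff₀ (pow_pos hC0 _)]
    calc ‖(T ^ N) v‖ ≤ C ^ (n - N) * ‖(T ^ n) v‖ := hkey
      _ = ‖(T ^ n) v‖ * C ^ (n - N) := by ring

lemma opNorm_nonneg (X : Matrix (Fin d) (Fin d) ℝ) : 0 ≤ opNorm X := norm_nonneg _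

lemma abs_entry_le_opNorm (X : Matrix (Fin d) (Fin d) ℝ) (a b : Fin d) :
    |X a b| ≤ opNorm X := by
  have h1 : Matrix.toEuclideanCLM (𝕜 := ℝ) X ((WithLp.equiv 2 (Fin d → ℝ)).symm (Pi.single b 1))
      = (WithLp.equiv 2 (Fin d → ℝ)).symm (Matrix.toLin' X (Pi.single b 1)) :=
    rfl
  have h2 : ‖(WithLp.equiv 2 (Fin d → ℝ)).symm (Matrix.toLin' X (Pi.single b 1))‖
      ≤ opNorm X * ‖(WithLp.equiv 2 (Fin d → ℝ)).symm (Pi.single b 1)‖ := by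
    rw [← h1]
    exact (Matrix.toEuclideanCLM (𝕜 := ℝ) X).le_opNorm _
  have h3 : ‖(WithLp.equiv 2 (Fin d → ℝ)).symm (Pi.single b 1)‖ = (1 : ℝ) := by
    have := EuclideanSpace.norm_single (𝕜 := ℝ) b (1 : ℝ)
    rw [EuclideanSpace.single] at this
    refine this.trans ?_
    norm_num
  have h4033 : Matrix.toLin' X (Pi.single b 1) = X.mulVec (Pi.single b 1) := by
    rw [Matrix.toLin'_apply]
  have h4 : |X a b| ≤ ‖(WithLp.equiv 2 (Fin d → ℝ)).symm (Matrix.toLin' X (Pi.single b 1))‖ := by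
    rw [EuclideanSpace.norm_eq]
    have hcoord : ‖((WithLp.equiv 2 (Fin d → ℝ)).symm (Matrix.toLin' X (Pi.single b 1))) a‖
        = |X a b| := by
      rw [WithLp.equiv_symm_apply, PiLp.toLp_apply, h4033, Matrix.mulVec_single]
      simp [Real.norm_eq_abs]
    calc |X a b| = Real.sqrt (|X a b| ^ 2) := by
          rw [Real.sqrt_sq (abs_nonneg _)]
      _ ≤ _ := by
          apply Real.sqrt_le_sqrt
          rw [← hcoord]
          exact Finset.single_le_sum (f := fun i =>
            ‖((WithLp.equiv 2 (Fin d → ℝ)).symm (Matrix.toLin' X (Pi.single b 1))) i‖ ^ 2)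
            (fun i _ => sq_nonneg _) (Finset.mem_univ a)
  calc |X a b| ≤ _ := h4
    _ ≤ opNorm X * ‖(WithLp.equiv 2 (Fin d → ℝ)).symm (Pi.single b 1)‖ := h2
    _ = opNorm X := by rw [h3, mul_one]

/-- Squared Frobenius norm. -/
noncomputable def frob (X : Matrix (Fin d) (Fin d) ℝ) : ℝ := ∑ a, ∑ b, (X a b) ^ 2

lemma frob_nonneg (X : Matrix (Fin d) (Fin d) ℝ) : 0 ≤ frob X :=
  Finset.sum_nonneg fun a _ => Finset.sum_nonneg fun b _ => sq_nonneg _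

lemma frob_le (X : Matrix (Fin d) (Fin d) ℝ) : frob X ≤ (d : ℝ) ^ 2 * opNorm X ^ 2 := by
  have : frob X ≤ ∑ _a : Fin d, ∑ _b : Fin d, opNorm X ^ 2 := by
    refine Finset.sum_le_sum fun a _ => Finset.sum_le_sum fun b _ => ?_
    calc (X a b) ^ 2 = |X a b| ^ 2 := (sq_abs _).symm
      _ ≤ opNorm X ^ 2 := by
          apply pow_le_pow_left₀ (abs_nonneg _) (abs_entry_le_opNorm X a b)
  have h2 : ∑ _a : Fin d, ∑ _b : Fin d, opNorm X ^ 2 = (d : ℝ) ^ 2 * opNorm X ^ 2 := by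
    simp [Finset.sum_const, nsmul_eq_mul]
    ring
  linarith [h2 ▸ this]

lemma row_sq_le_frob (X : Matrix (Fin d) (Fin d) ℝ) (a : Fin d) :
    ∑ k, (X a k) ^ 2 ≤ frob X :=
  Finset.single_le_sum (f := fun a' => ∑ k, (X a' k) ^ 2)
    (fun a' _ => Finset.sum_nonneg fun k _ => sq_nonneg _) (Finset.mem_univ a)

/-- total squared Frobenius mass of words of length `n`. -/
noncomputable def tsum' (n : ℕ) : ℝ := ∑ x : Fin n → Fin M, frob (wordProd A x)

lemma tsum'_nonneg (n : ℕ) : 0 ≤ tsum' A n :=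
  Finset.sum_nonneg fun x _ => frob_nonneg _

lemma abs_Sn_entry_le (n : ℕ) (a b : Fin d) : |Sn A n a b| ≤ tsum' A n := by
  have hentry : Sn A n a b = ∑ x : Fin n → Fin M, ∑ k, wordProd A x a k * wordProd A x b k := by
    simp [Sn, Matrix.sum_apply, Matrix.mul_apply, Matrix.transpose_apply]
  rw [hentry]
  calc |∑ x : Fin n → Fin M, ∑ k, wordProd A x a k * wordProd A x b k|
      ≤ ∑ x : Fin n → Fin M, |∑ k, wordProd A x a k * wordProd A x b k| :=
        Finset.abs_sum_le_sum_abs _ _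
    _ ≤ ∑ x : Fin n → Fin M, frob (wordProd A x) := by
        refine Finset.sum_le_sum fun x _ => ?_
        calc |∑ k, wordProd A x a k * wordProd A x b k|
            ≤ ∑ k, |wordProd A x a k * wordProd A x b k| := Finset.abs_sum_le_sum_abs _ _
          _ ≤ ∑ k, ((wordProd A x a k) ^ 2 + (wordProd A x b k) ^ 2) / 2 := by
              refine Finset.sum_le_sum fun k _ => ?_
              rw [abs_mul]
              have h2 := two_mul_le_add_sq |wordProd A x a k| |wordProd A x b k|
              rw [sq_abs, sq_abs] at h2
              linarith
          _ = ((∑ k, (wordProd A x a k) ^ 2) + ∑ k, (wordProd A x b k) ^ 2) / 2 := by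
              rw [← Finset.sum_add_distrib, ← Finset.sum_div]
          _ ≤ (frob (wordProd A x) + frob (wordProd A x)) / 2 := by
              have ha := row_sq_le_frob (wordProd A x) a
              have hb := row_sq_le_frob (wordProd A x) b
              linarith
          _ = frob (wordProd A x) := by ring
    _ = tsum' A n := rfl

lemma Sn_entry_pos (hd : 2 ≤ d) (hA : IsIrredTuple A) (n : ℕ) :
    ∃ a : Fin d, 0 < Sn A n a a := by
  obtain ⟨x₀, hx₀⟩ := exists_word_ne_zero A hd hA n
  obtain ⟨a, b, hab⟩ : ∃ a b, wordProd A x₀ a b ≠ 0 := by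
    by_contra h
    push_neg at h
    exact hx₀ (by ext a b; exact h a b)
  refine ⟨a, ?_⟩
  have hentry : Sn A n a a = ∑ x : Fin n → Fin M, ∑ k, wordProd A x a k * wordProd A x a k := by
    simp [Sn, Matrix.sum_apply, Matrix.mul_apply, Matrix.transpose_apply]
  rw [hentry]
  have hterm : (0:ℝ) < ∑ k, wordProd A x₀ a k * wordProd A x₀ a k := by
    have h1 : (0:ℝ) < wordProd A x₀ a b * wordProd A x₀ a b := mul_self_pos.mpr hab
    have h2 : wordProd A x₀ a b * wordProd A x₀ a b
        ≤ ∑ k, wordProd A x₀ a k * wordProd A x₀ a k :=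
      Finset.single_le_sum (f := fun k => wordProd A x₀ a k * wordProd A x₀ a k)
        (fun k _ => mul_self_nonneg _) (Finset.mem_univ b)
    linarith
  have h3 : wordProd A x₀ a b * wordProd A x₀ a b ≤ _ := le_rfl
  exact Finset.sum_pos' (fun x _ => Finset.sum_nonneg fun k _ => mul_self_nonneg _)
    ⟨x₀, Finset.mem_univ x₀, hterm⟩

/-- Exponential lower bound on the total squared Frobenius mass. -/
lemma tsum'_lb (hd : 2 ≤ d) (hA : IsIrredTuple A) :
    ∃ c γ : ℝ, 0 < c ∧ 0 < γ ∧ ∀ n, c * γ ^ n ≤ tsum' A n := by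
  have hv : ∀ n, (Qp A ^ n) (fun p => (1 : Matrix (Fin d) (Fin d) ℝ) p.1 p.2) ≠ 0 := by
    intro n h
    rw [pow_Qp_one] at h
    obtain ⟨a, ha⟩ := Sn_entry_pos A hd hA n
    have := congrFun h (a, a)
    rw [Pi.zero_apply] at this
    rw [this] at ha
    exact lt_irrefl _ ha
  obtain ⟨c, γ, hc, hγ, hb⟩ := fitting_bound (Qp A)
    (fun p => (1 : Matrix (Fin d) (Fin d) ℝ) p.1 p.2) hv
  refine ⟨c, γ, hc, hγ, fun n => ?_⟩
  refine le_trans (hb n) ?_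
  rw [pow_Qp_one]
  rw [pi_norm_le_iff_of_nonneg (tsum'_nonneg A n)]
  intro p
  rw [Real.norm_eq_abs]
  exact abs_Sn_entry_le A n p.1 p.2

/-- Exponential lower bound on the largest squared operator norm among words of length `n`. -/
lemma exists_word_opNorm_lb (hM : 2 ≤ M) (hd : 2 ≤ d) (hA : IsIrredTuple A) :
    ∃ c β : ℝ, 0 < c ∧ 0 < β ∧ ∀ n, ∃ x : Fin n → Fin M,
      c * β ^ n ≤ opNorm (wordProd A x) ^ (2 : ℕ) := by
  obtain ⟨c, γ, hc, hγ, hb⟩ := tsum'_lb A hd hA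
  have hd0 : (0:ℝ) < (d:ℝ) := by positivity
  have hM0 : (0:ℝ) < (M:ℝ) := by
    have : 0 < M := by omega
    exact_mod_cast this
  refine ⟨c / (d : ℝ) ^ 2, γ / (M : ℝ), div_pos hc (pow_pos hd0 2), div_pos hγ hM0, fun n => ?_⟩
  have hsum2 : tsum' A n / (d : ℝ) ^ 2 ≤ ∑ x : Fin n → Fin M, opNorm (wordProd A x) ^ (2:ℕ) := by
    rw [div_le_iff₀ (by positivity)]
    calc tsum' A n = ∑ x : Fin n → Fin M, frob (wordProd A x) := rfl
      _ ≤ ∑ x : Fin n → Fin M, (d : ℝ) ^ 2 * opNorm (wordProd A x) ^ 2 :=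
          Finset.sum_le_sum fun x _ => frob_le _
      _ = (∑ x : Fin n → Fin M, opNorm (wordProd A x) ^ (2:ℕ)) * (d : ℝ) ^ 2 := by
          rw [Finset.sum_mul]
          exact Finset.sum_congr rfl fun x _ => by ring
  have hconst : ∑ _x : Fin n → Fin M, (c / (d : ℝ) ^ 2 * (γ / (M : ℝ)) ^ n)
      ≤ ∑ x : Fin n → Fin M, opNorm (wordProd A x) ^ (2:ℕ) := by
    have hcard : (Fintype.card (Fin n → Fin M) : ℝ) = (M : ℝ) ^ n := by
      rw [Fintype.card_fun]
      push_cast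
      simp
    rw [Finset.sum_const, Finset.card_univ, nsmul_eq_mul, hcard]
    have heq : (M:ℝ) ^ n * (c / (d : ℝ) ^ 2 * (γ / (M : ℝ)) ^ n) = (c * γ ^ n) / (d:ℝ) ^ 2 := by
      rw [div_pow]
      field_simp
    rw [heq]
    refine le_trans ?_ hsum2
    gcongr
    exact hb n
  haveI : Nonempty (Fin M) := ⟨⟨0, by omega⟩⟩
  have hne : (Finset.univ : Finset (Fin n → Fin M)).Nonempty := Finset.univ_nonempty
  obtain ⟨x, _, hx⟩ := Finset.exists_le_of_sum_le hne hconst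
  exact ⟨x, hx⟩

end Stmt1Aux

/-- the pressure of an irreducible tuple is finite. -/
theorem stmt_1 {M d : ℕ} (hM : 2 ≤ M) (hd : 2 ≤ d)
    (A : Fin M → Matrix (Fin d) (Fin d) ℝ) (hA : IsIrredTuple A) :
    ∀ s : ℝ, 0 < s → ⊥ < pressure A s := by
  intro s hs
  obtain ⟨c', β, hc', hβ, hbound⟩ := Stmt1Aux.exists_word_opNorm_lb A hM hd hA
  set K := s / 2 * (min (Real.log c') 0 + Real.log β) with hK
  have hmain : (K : EReal) ≤ pressure A s := by
    rw [pressure]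
    refine le_iInf fun n => ?_
    obtain ⟨x₀, hx₀⟩ := hbound (n + 1)
    have hBpos : (0:ℝ) < c' * β ^ (n + 1) := by positivity
    have hopos : (0:ℝ) < opNorm (wordProd A x₀) := by
      by_contra h
      push_neg at h
      have h0 : opNorm (wordProd A x₀) = 0 :=
        le_antisymm h (Stmt1Aux.opNorm_nonneg _)
      rw [h0] at hx₀
      simp at hx₀
      nlinarith
    have hterm : (c' * β ^ (n + 1)) ^ (s / 2) ≤ opNorm (wordProd A x₀) ^ s := by
      calc (c' * β ^ (n + 1)) ^ (s / 2)
          ≤ (opNorm (wordProd A x₀) ^ (2:ℕ)) ^ (s / 2) :=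
            Real.rpow_le_rpow hBpos.le hx₀ (by positivity)
        _ = opNorm (wordProd A x₀) ^ s := by
            rw [← Real.rpow_natCast (opNorm (wordProd A x₀)) 2, ← Real.rpow_mul hopos.le]
            norm_num
            congr 1
            ring
    have hsum : (c' * β ^ (n + 1)) ^ (s / 2)
        ≤ ∑ x : Fin (n + 1) → Fin M, opNorm (wordProd A x) ^ s :=
      hterm.trans (Finset.single_le_sum
        (fun x _ => Real.rpow_nonneg (Stmt1Aux.opNorm_nonneg _) s) (Finset.mem_univ x₀))
    have hSpos : (0:ℝ) < ∑ x : Fin (n + 1) → Fin M, opNorm (wordProd A x) ^ s :=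
      lt_of_lt_of_le (Real.rpow_pos_of_pos hBpos _) hsum
    rw [if_neg hSpos.ne']
    rw [EReal.coe_le_coe_iff]
    have hlog : s / 2 * (Real.log c' + ((n:ℝ) + 1) * Real.log β)
        ≤ Real.log (∑ x : Fin (n + 1) → Fin M, opNorm (wordProd A x) ^ s) := by
      have h1 := Real.log_le_log (Real.rpow_pos_of_pos hBpos _) hsum
      rw [Real.log_rpow hBpos, Real.log_mul hc'.ne' (pow_pos hβ _).ne', Real.log_pow] at h1
      push_cast at h1
      linarith
    have hn1 : (0:ℝ) < (n:ℝ) + 1 := by positivity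
    rw [le_div_iff₀ hn1]
    have hmin : min (Real.log c') 0 * ((n:ℝ) + 1) ≤ Real.log c' := by
      rcases le_or_gt (Real.log c') 0 with h | h
      · rw [min_eq_left h]; nlinarith
      · rw [min_eq_right h.le, zero_mul]; exact h.le
    have hKexp : K * ((n:ℝ) + 1)
        = s / 2 * (min (Real.log c') 0 * ((n:ℝ) + 1) + ((n:ℝ) + 1) * Real.log β) := by
      rw [hK]; ring
    rw [hKexp]
    refine le_trans ?_ hlog
    apply mul_le_mul_of_nonneg_left _ (by positivity : (0:ℝ) ≤ s / 2)
    linarith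
  exact lt_of_lt_of_le (EReal.bot_lt_coe K) hmain
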